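/- Let P, N ⊆ ℝ be disjoint Borel sets with |ℝ \ (P ∪ N)| = 0 such that every nonempty open interval meets both P and N in positive measure. Define f(τ) = 2 + ∫₀^τ (𝟙_P(r) − 𝟙_N(r)) dr. Then for all x < y in [0,1], |f(y) − f(x)| < |y − x|. -/

import Mathlib

open MeasureTheory Set

theorem f_strict_contraction
    (P N : Set ℝ) (hP : MeasurableSet P) (hN : MeasurableSet N)
    (hdisj : Disjoint P N)
    (hconull : volume (univ \ (P ∪ N)) = 0)
    (hpos : ∀ a b : ℝ, a < b →
      0 < volume (Ioo a b ∩ P) ∧ 0 < volume (Ioo a b ∩ N))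
    (f : ℝ → ℝ)
    (hf : ∀ τ : ℝ, f τ = 2 + ∫ r in (0:ℝ)..τ,
      (P.indicator (fun _ => (1:ℝ)) r - N.indicator (fun _ => (1:ℝ)) r)) :
    ∀ x y : ℝ, x ∈ Icc (0:ℝ) 1 → y ∈ Icc (0:ℝ) 1 → x < y →
      |f y - f x| < |y - x| := by
  intro x y hx hy hxy
  have hintI : ∀ (S : Set ℝ), MeasurableSet S → ∀ a b : ℝ,
      IntervalIntegrable (S.indicator (fun _ => (1:ℝ))) volume a b := by
    intro S hS a b
    rw [intervalIntegrable_iff]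
    exact (integrableOn_const measure_Ioc_lt_top.ne).indicator hS
  have hint : ∀ a b : ℝ, IntervalIntegrable
      (fun r => P.indicator (fun _ => (1:ℝ)) r - N.indicator (fun _ => (1:ℝ)) r)
      volume a b := fun a b => (hintI P hP a b).sub (hintI N hN a b)
  have hdiff : f y - f x = ∫ r in x..y,
      (P.indicator (fun _ => (1:ℝ)) r - N.indicator (fun _ => (1:ℝ)) r) := by
    rw [hf x, hf y]
    have := intervalIntegral.integral_interval_sub_left (hint 0 y) (hint 0 x)
    linarith [this]
  have hsplit : (∫ r in x..y,
      (P.indicator (fun _ => (1:ℝ)) r - N.indicator (fun _ => (1:ℝ)) r))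
      = (∫ r in x..y, P.indicator (fun _ => (1:ℝ)) r)
        - ∫ r in x..y, N.indicator (fun _ => (1:ℝ)) r :=
    intervalIntegral.integral_sub (hintI P hP x y) (hintI N hN x y)
  have hval : ∀ (S : Set ℝ), MeasurableSet S →
      (∫ r in x..y, S.indicator (fun _ => (1:ℝ)) r)
        = (volume (Ioc x y ∩ S)).toReal := by
    intro S hS
    rw [intervalIntegral.integral_of_le hxy.le, setIntegral_indicator hS,
      setIntegral_const, smul_eq_mul, mul_one, measureReal_def]
  set a := volume (Ioc x y ∩ P) with ha
  set b := volume (Ioc x y ∩ N) with hb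
  have hafin : a < ⊤ := lt_of_le_of_lt (measure_mono inter_subset_left) measure_Ioc_lt_top
  have hbfin : b < ⊤ := lt_of_le_of_lt (measure_mono inter_subset_left) measure_Ioc_lt_top
  have hapos : 0 < a := lt_of_lt_of_le (hpos x y hxy).1
    (measure_mono (inter_subset_inter_left _ Ioo_subset_Ioc_self))
  have hbpos : 0 < b := lt_of_lt_of_le (hpos x y hxy).2
    (measure_mono (inter_subset_inter_left _ Ioo_subset_Ioc_self))
  have hsum : a + b = ENNReal.ofReal (y - x) := by
    have h1 : volume (Ioc x y \ (P ∪ N)) = 0 :=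
      measure_mono_null (diff_subset_diff_left (subset_univ _)) hconull
    have h2 : volume (Ioc x y) = volume (Ioc x y ∩ (P ∪ N)) := by
      have := measure_inter_add_diff (μ := volume) (Ioc x y) (hP.union hN)
      rw [h1, add_zero] at this
      exact this.symm
    have h3 : Ioc x y ∩ (P ∪ N) = (Ioc x y ∩ P) ∪ (Ioc x y ∩ N) := inter_union_distrib_left _ _ _
    have h4 : Disjoint (Ioc x y ∩ P) (Ioc x y ∩ N) :=
      hdisj.mono inter_subset_right inter_subset_right
    rw [ha, hb, ← measure_union h4 ((measurableSet_Ioc).inter hN), ← h3, ← h2,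
      Real.volume_Ioc]
  have hsumR : a.toReal + b.toReal = y - x := by
    rw [← ENNReal.toReal_add hafin.ne hbfin.ne, hsum, ENNReal.toReal_ofReal (by linarith)]
  have haR : 0 < a.toReal := ENNReal.toReal_pos hapos.ne' hafin.ne
  have hbR : 0 < b.toReal := ENNReal.toReal_pos hbpos.ne' hbfin.ne
  rw [hdiff, hsplit, hval P hP, hval N hN, ← ha, ← hb, abs_of_pos (by linarith : (0:ℝ) < y - x)]
  rw [abs_lt]
  constructor <;> linarith
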